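/- Let n ≥ 2 and t ≥ 1 be integers and let I_1, …, I_m be (not necessarily distinct) nonempty integer intervals contained in {1, …, n}. Suppose that for every k with 1 ≤ k ≤ n−1, at most t of the intervals I_1, …, I_m intersect the two-element set {k, k+1}. Then the index set {1, …, m} can be partitioned into at most t classes such that within each class, any two intervals I = [a, b] and I' = [a', b'] with b < a' satisfy a' ≥ b + 2 (i.e., intervals in the same class are pairwise disjoint and separated by at least one position). -/

import Mathlib

open scoped Classical

lemma aux_coalesce (n t : ℕ) (hn : 2 ≤ n) (ht : 1 ≤ t) :
    ∀ m (a b : ℕ → ℕ),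
    (∀ s ∈ Finset.Icc 1 m, 1 ≤ a s ∧ a s ≤ b s ∧ b s ≤ n) →
    (∀ s ∈ Finset.Icc 1 m, ∀ s' ∈ Finset.Icc 1 m, s ≤ s' → a s ≤ a s') →
    (∀ k : ℕ, 1 ≤ k → k ≤ n - 1 →
      ((Finset.Icc 1 m).filter
        (fun s => (Finset.Icc (a s) (b s) ∩ ({k, k + 1} : Finset ℕ)).Nonempty)).card ≤ t) →
    ∃ f : ℕ → ℕ,
      (∀ s ∈ Finset.Icc 1 m, f s ∈ Finset.Icc 1 t) ∧
      (∀ s ∈ Finset.Icc 1 m, ∀ s' ∈ Finset.Icc 1 m,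
        f s = f s' → b s < a s' → b s + 2 ≤ a s') := by
  intro m
  induction m with
  | zero =>
    intro a b _ _ _
    exact ⟨fun _ => 1, by simp, by simp⟩
  | succ m ih =>
    intro a b hab hmono hmeet
    have hsub : Finset.Icc 1 m ⊆ Finset.Icc 1 (m + 1) := by
      intro x hx; simp only [Finset.mem_Icc] at *; omega
    obtain ⟨f, hf1, hf2⟩ := ih a b
      (fun s hs => hab s (hsub hs))
      (fun s hs s' hs' h => hmono s (hsub hs) s' (hsub hs') h)
      (fun k hk1 hk2 => le_trans
        (Finset.card_le_card (Finset.filter_subset_filter _ hsub)) (hmeet k hk1 hk2))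
    have hm1 : m + 1 ∈ Finset.Icc 1 (m + 1) := by simp
    obtain ⟨ha1, hab1, hb1⟩ := hab (m + 1) hm1
    -- the critical pair position
    set k₀ : ℕ := max 1 (a (m + 1) - 1) with hk₀
    have hk₀f : (a (m + 1) ≤ 1 ∧ k₀ = 1) ∨ (2 ≤ a (m + 1) ∧ k₀ + 1 = a (m + 1)) := by
      rw [hk₀]
      rcases le_or_gt (a (m + 1)) 1 with h | h
      · left; refine ⟨h, ?_⟩
        simp [Nat.sub_eq_zero_of_le h]
      · right; refine ⟨h, ?_⟩
        rw [max_eq_right (by omega : 1 ≤ a (m + 1) - 1)]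
        omega
    clear_value k₀
    have hk₀1 : 1 ≤ k₀ := by omega
    have hk₀2 : k₀ ≤ n - 1 := by
      have : a (m + 1) ≤ n := le_trans hab1 hb1
      omega
    -- the set of earlier intervals conflicting with interval m+1
    set S : Finset ℕ := (Finset.Icc 1 m).filter (fun s => a (m + 1) < b s + 2) with hS
    have hSmeet : ∀ s ∈ S, (Finset.Icc (a s) (b s) ∩ ({k₀, k₀ + 1} : Finset ℕ)).Nonempty := by
      intro s hs
      simp only [hS, Finset.mem_filter] at hs
      obtain ⟨hs1, hs2⟩ := hs
      obtain ⟨ha', hab', hb'⟩ := hab s (hsub hs1)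
      have hale : a s ≤ a (m + 1) := hmono s (hsub hs1) (m + 1) hm1 (by
        simp only [Finset.mem_Icc] at hs1; omega)
      by_cases hc : a s ≤ k₀
      · exact ⟨k₀, by
          simp only [Finset.mem_inter, Finset.mem_Icc, Finset.mem_insert, Finset.mem_singleton]
          exact ⟨⟨by omega, by omega⟩, Or.inl trivial⟩⟩
      · exact ⟨a s, by simp only [Finset.mem_inter, Finset.mem_Icc, Finset.mem_insert,
          Finset.mem_singleton]; omega⟩
    have hlast : (Finset.Icc (a (m+1)) (b (m+1)) ∩ ({k₀, k₀ + 1} : Finset ℕ)).Nonempty := by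
      by_cases hc : a (m + 1) = 1
      · exact ⟨1, by simp only [Finset.mem_inter, Finset.mem_Icc, Finset.mem_insert,
          Finset.mem_singleton]; omega⟩
      · exact ⟨a (m + 1), by simp only [Finset.mem_inter, Finset.mem_Icc, Finset.mem_insert,
          Finset.mem_singleton]; omega⟩
    have hScard : S.card + 1 ≤ t := by
      have hsub2 : insert (m + 1) S ⊆ (Finset.Icc 1 (m + 1)).filter
          (fun s => (Finset.Icc (a s) (b s) ∩ ({k₀, k₀ + 1} : Finset ℕ)).Nonempty) := by
        intro x hx
        rcases Finset.mem_insert.mp hx with h | h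
        · subst h; exact Finset.mem_filter.mpr ⟨hm1, hlast⟩
        · refine Finset.mem_filter.mpr ⟨hsub (Finset.mem_of_mem_filter x h), hSmeet x h⟩
      have hnotin : m + 1 ∉ S := by
        simp only [hS, Finset.mem_filter, Finset.mem_Icc]; omega
      calc S.card + 1 = (insert (m + 1) S).card := (Finset.card_insert_of_notMem hnotin).symm
        _ ≤ _ := Finset.card_le_card hsub2
        _ ≤ t := hmeet k₀ hk₀1 hk₀2
    -- pick a free color
    have hfree : ∃ c ∈ Finset.Icc 1 t, c ∉ S.image f := by
      by_contra h
      push_neg at h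
      have : Finset.Icc 1 t ⊆ S.image f := h
      have h1 := Finset.card_le_card this
      have h2 := Finset.card_image_le (s := S) (f := f)
      simp only [Nat.card_Icc] at h1
      omega
    obtain ⟨c, hc1, hc2⟩ := hfree
    refine ⟨Function.update f (m + 1) c, ?_, ?_⟩
    · intro s hs
      rcases Finset.mem_Icc.mp hs with ⟨hs1, hs2⟩
      by_cases h : s = m + 1
      · subst h; simpa using hc1
      · rw [Function.update_of_ne h]
        exact hf1 s (Finset.mem_Icc.mpr ⟨hs1, by omega⟩)
    · intro s hs s' hs' hfe hlt
      rcases Finset.mem_Icc.mp hs with ⟨hs1, hs2⟩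
      rcases Finset.mem_Icc.mp hs' with ⟨hs'1, hs'2⟩
      by_cases h : s = m + 1
      · -- s = m+1, so a s' ≤ a (m+1) ≤ b (m+1) = b s, contradiction with b s < a s'
        subst h
        have : a s' ≤ a (m + 1) := hmono s' (Finset.mem_Icc.mpr ⟨hs'1, hs'2⟩) (m + 1) hm1
          (by omega)
        omega
      · have hsm : s ∈ Finset.Icc 1 m := Finset.mem_Icc.mpr ⟨hs1, by omega⟩
        by_cases h' : s' = m + 1
        · subst h'
          rw [Function.update_of_ne h, Function.update_self] at hfe
          by_contra hcon
          have hsS : s ∈ S := by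
            simp only [hS, Finset.mem_filter]
            exact ⟨hsm, by omega⟩
          exact hc2 (Finset.mem_image.mpr ⟨s, hsS, hfe⟩)
        · rw [Function.update_of_ne h, Function.update_of_ne h'] at hfe
          exact hf2 s hsm s' (Finset.mem_Icc.mpr ⟨hs'1, by omega⟩) hfe hlt

/-- Coalescing claim: if every pair of adjacent positions `{k, k+1}` meets at most `t`
of the intervals `[a s, b s]` (`1 ≤ s ≤ m`), then the intervals can be partitioned
into at most `t` classes so that any two intervals in a class are separated by at
least one empty position. -/
theorem stmt11 (n t m : ℕ) (hn : 2 ≤ n) (ht : 1 ≤ t)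
    (a b : ℕ → ℕ)
    (hab : ∀ s ∈ Finset.Icc 1 m, 1 ≤ a s ∧ a s ≤ b s ∧ b s ≤ n)
    (hmeet : ∀ k : ℕ, 1 ≤ k → k ≤ n - 1 →
      ((Finset.Icc 1 m).filter
        (fun s => (Finset.Icc (a s) (b s) ∩ ({k, k + 1} : Finset ℕ)).Nonempty)).card ≤ t) :
    ∃ f : ℕ → ℕ,
      (∀ s ∈ Finset.Icc 1 m, f s ∈ Finset.Icc 1 t) ∧
      (∀ s ∈ Finset.Icc 1 m, ∀ s' ∈ Finset.Icc 1 m,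
        f s = f s' → b s < a s' → b s + 2 ≤ a s') := by
  -- sort the indices by left endpoint
  set r : ℕ → ℕ → Prop := fun s s' => a s < a s' ∨ (a s = a s' ∧ s ≤ s') with hr
  haveI : IsTrans ℕ r := ⟨by intro x y z hx hy; simp only [hr] at *; omega⟩
  haveI : IsAntisymm ℕ r := ⟨by intro x y hx hy; simp only [hr] at *; omega⟩
  haveI : IsTotal ℕ r := ⟨by intro x y; simp only [hr]; omega⟩
  set l : List ℕ := Finset.sort (Finset.Icc 1 m) r with hl
  have hlen : l.length = m := by
    rw [hl, Finset.length_sort, Nat.card_Icc]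
    omega
  have hmem : ∀ x, x ∈ l ↔ x ∈ Finset.Icc 1 m := fun x => Finset.mem_sort r
  have hnd : l.Nodup := Finset.sort_nodup _ r
  have hsorted : List.Pairwise r l := Finset.pairwise_sort _ r
  set e : ℕ → ℕ := fun s => l.getD (s - 1) 0 with he
  have heget : ∀ s ∈ Finset.Icc 1 m, ∀ h : s - 1 < l.length, e s = l.get ⟨s - 1, h⟩ := by
    intro s _ h
    rw [he]
    exact List.getD_eq_getElem l 0 h
  have hemem : ∀ s ∈ Finset.Icc 1 m, e s ∈ Finset.Icc 1 m := by
    intro s hs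
    have h : s - 1 < l.length := by
      rw [hlen]; rcases Finset.mem_Icc.mp hs with ⟨h1, h2⟩; omega
    rw [heget s hs h, ← hmem]
    exact List.get_mem _ _
  have heinj : ∀ s ∈ Finset.Icc 1 m, ∀ s' ∈ Finset.Icc 1 m, e s = e s' → s = s' := by
    intro s hs s' hs' hee
    have h : s - 1 < l.length := by
      rw [hlen]; rcases Finset.mem_Icc.mp hs with ⟨h1, h2⟩; omega
    have h' : s' - 1 < l.length := by
      rw [hlen]; rcases Finset.mem_Icc.mp hs' with ⟨h1, h2⟩; omega
    rw [heget s hs h, heget s' hs' h'] at hee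
    have := (hnd.get_inj_iff.mp hee)
    have h2 := Fin.mk.injEq .. ▸ this
    rcases Finset.mem_Icc.mp hs with ⟨hA, _⟩
    rcases Finset.mem_Icc.mp hs' with ⟨hB, _⟩
    have : s - 1 = s' - 1 := Fin.mk_eq_mk.mp this
    omega
  have hesurj : ∀ u ∈ Finset.Icc 1 m, ∃ s ∈ Finset.Icc 1 m, e s = u := by
    intro u hu
    obtain ⟨i, hi⟩ := List.mem_iff_get.mp ((hmem u).mpr hu)
    have hilt : (i : ℕ) < m := by have := i.2; omega
    have himem : (i : ℕ) + 1 ∈ Finset.Icc 1 m := by simp only [Finset.mem_Icc]; omega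
    refine ⟨i + 1, himem, ?_⟩
    have h : (i + 1 : ℕ) - 1 < l.length := by simpa using i.2
    rw [heget (i + 1) himem h]
    simpa using hi
  have hemono : ∀ s ∈ Finset.Icc 1 m, ∀ s' ∈ Finset.Icc 1 m, s ≤ s' → a (e s) ≤ a (e s') := by
    intro s hs s' hs' hle
    rcases eq_or_lt_of_le hle with h | h
    · subst h; exact le_refl _
    have hA : s - 1 < l.length := by
      rw [hlen]; rcases Finset.mem_Icc.mp hs with ⟨h1, h2⟩; omega
    have hB : s' - 1 < l.length := by
      rw [hlen]; rcases Finset.mem_Icc.mp hs' with ⟨h1, h2⟩; omega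
    rw [heget s hs hA, heget s' hs' hB]
    have hfin : (⟨s - 1, hA⟩ : Fin l.length) < ⟨s' - 1, hB⟩ := by
      simp only [Fin.mk_lt_mk]
      rcases Finset.mem_Icc.mp hs with ⟨h1, _⟩; omega
    have := hsorted.rel_get_of_lt hfin
    simp only [hr] at this
    omega
  -- transfer of the adjacency-meeting cardinality bound
  have hcard : ∀ k : ℕ,
      ((Finset.Icc 1 m).filter
        (fun s => (Finset.Icc (a (e s)) (b (e s)) ∩ ({k, k + 1} : Finset ℕ)).Nonempty)).card
        = ((Finset.Icc 1 m).filter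
        (fun s => (Finset.Icc (a s) (b s) ∩ ({k, k + 1} : Finset ℕ)).Nonempty)).card := by
    intro k
    refine Finset.card_bij (fun s _ => e s) ?_ ?_ ?_
    · intro s hs
      rcases Finset.mem_filter.mp hs with ⟨h1, h2⟩
      exact Finset.mem_filter.mpr ⟨hemem s h1, h2⟩
    · intro s hs s' hs'
      exact heinj s (Finset.mem_of_mem_filter _ hs) s' (Finset.mem_of_mem_filter _ hs')
    · intro u hu
      rcases Finset.mem_filter.mp hu with ⟨h1, h2⟩
      obtain ⟨s, hs, hes⟩ := hesurj u h1
      exact ⟨s, Finset.mem_filter.mpr ⟨hs, by rw [hes]; exact h2⟩, hes⟩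
  -- apply the sorted version
  obtain ⟨g, hg1, hg2⟩ := aux_coalesce n t hn ht m (fun s => a (e s)) (fun s => b (e s))
    (fun s hs => hab (e s) (hemem s hs))
    hemono
    (fun k hk1 hk2 => by
      show ((Finset.Icc 1 m).filter
        (fun s => (Finset.Icc (a (e s)) (b (e s)) ∩ ({k, k + 1} : Finset ℕ)).Nonempty)).card ≤ t
      rw [hcard k]
      exact hmeet k hk1 hk2)
  -- transport back along the inverse of e
  set e' : ℕ → ℕ := fun u => l.idxOf u + 1 with he'
  have he'mem : ∀ u ∈ Finset.Icc 1 m, e' u ∈ Finset.Icc 1 m := by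
    intro u hu
    have : l.idxOf u < l.length := List.idxOf_lt_length_iff.mpr ((hmem u).mpr hu)
    rw [hlen] at this
    simp only [he', Finset.mem_Icc]; omega
  have hee' : ∀ u ∈ Finset.Icc 1 m, e (e' u) = u := by
    intro u hu
    have hlt : l.idxOf u < l.length := List.idxOf_lt_length_iff.mpr ((hmem u).mpr hu)
    have h : e' u - 1 < l.length := by simp only [he']; simpa using hlt
    rw [heget (e' u) (he'mem u hu) h]
    have : (⟨e' u - 1, h⟩ : Fin l.length) = ⟨l.idxOf u, hlt⟩ := by
      simp [he']
    rw [this]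
    exact List.getElem_idxOf hlt
  refine ⟨fun u => g (e' u), ?_, ?_⟩
  · intro u hu
    exact hg1 (e' u) (he'mem u hu)
  · intro u hu u' hu' hgg hlt
    have h1 := hg2 (e' u) (he'mem u hu) (e' u') (he'mem u' hu') hgg
    rw [hee' u hu, hee' u' hu'] at h1
    exact h1 hlt
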